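/- Let F be a field and let H1 and H2 be groups. Let τ1 : H1 → Aut_F(W1) be an irreducible finite-dimensional linear representation of H1 over F, and let τ2 : H2 → Aut_F(W2) be an absolutely irreducible finite-dimensional linear representation of H2 over F. Then the linear representation of the product group H1 × H2 on the F-vector space Hom_F(W1, W2), given by (h1, h2) · φ = τ2(h2) ∘ φ ∘ τ1(h1)⁻¹, is irreducible. -/

import Mathlib

open Function Module
open scoped TensorProduct
open scoped Pointwise

universe u v w x y

/-- A linear representation `τ : H →* Aut_F(W)` is *irreducible* if `W ≠ 0` and the only
`H`-invariant `F`-subspaces of `W` are `0` and `W`. -/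
def RepIsIrreducible {F : Type u} [Field F] {H : Type v} [Group H]
    {W : Type w} [AddCommGroup W] [Module F W] (τ : Representation F H W) : Prop :=
  Nontrivial W ∧
    ∀ p : Submodule F W, (∀ h : H, ∀ w ∈ p, τ h w ∈ p) → p = ⊥ ∨ p = ⊤

/-- A linear representation is *absolutely irreducible* if it remains irreducible after
extension of scalars to every field extension `E` of `F`. -/
def RepIsAbsolutelyIrreducible {F : Type u} [Field F] {H : Type v} [Group H]
    {W : Type w} [AddCommGroup W] [Module F W] (τ : Representation F H W) : Prop :=
  ∀ (E : Type u) [Field E] [Algebra F E],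
    Nontrivial (E ⊗[F] W) ∧
      ∀ p : Submodule E (E ⊗[F] W),
        (∀ h : H, ∀ x ∈ p, LinearMap.baseChange E (τ h) x ∈ p) → p = ⊥ ∨ p = ⊤


lemma exists_dual_eq_one {F : Type*} [Field F] {V : Type*} [AddCommGroup V] [Module F V]
    {x : V} (hx : x ≠ 0) : ∃ f : Module.Dual F V, f x = 1 := by
  obtain ⟨f, hf, -⟩ := (⊥ : Submodule F V).exists_dual_map_eq_bot_of_notMem
    (by simpa using hx) inferInstance
  exact ⟨(f x)⁻¹ • f, by simp [inv_mul_cancel₀ hf]⟩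

lemma dual_sub_eq_top {F : Type*} [Field F] {V : Type*} [AddCommGroup V] [Module F V]
    [FiniteDimensional F V] (N : Submodule F (Module.Dual F V))
    (h : ∀ x : V, (∀ μ ∈ N, μ x = 0) → x = 0) : N = ⊤ := by
  have hbot : N.dualCoannihilator = ⊥ := by
    rw [Submodule.eq_bot_iff]
    exact fun x hx => h x ((Submodule.mem_dualCoannihilator x).mp hx)
  apply Submodule.eq_top_of_finrank_eq
  have h1 := Subspace.finrank_add_finrank_dualCoannihilator_eq N
  rw [hbot, finrank_bot, add_zero] at h1
  rw [h1, Subspace.dual_finrank_eq]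

lemma rank_one_span {F : Type*} [Field F] {V W : Type*} [AddCommGroup V] [Module F V]
    [FiniteDimensional F V] [AddCommGroup W] [Module F W] (p : Submodule F (V →ₗ[F] W))
    (h : ∀ (g : Module.Dual F V) (w : W), g.smulRight w ∈ p) : p = ⊤ := by
  rw [Submodule.eq_top_iff']
  intro u
  have hu : u = ∑ i, (Module.finBasis F V |>.coord i).smulRight (u (Module.finBasis F V i)) := by
    apply (Module.finBasis F V).ext
    intro j
    simp [LinearMap.sum_apply, Basis.coord_apply, Basis.repr_self, Finsupp.single_apply,
      ite_smul, Finset.sum_ite_eq]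
  rw [hu]
  exact Submodule.sum_mem _ fun i _ => h _ _


lemma burnside {E : Type*} [Field E] [IsAlgClosed E] {V : Type*} [AddCommGroup V] [Module E V]
    [FiniteDimensional E V] [Nontrivial V] (A : Submodule E (V →ₗ[E] V))
    (hone : LinearMap.id ∈ A)
    (hmul : ∀ a ∈ A, ∀ b ∈ A, a ∘ₗ b ∈ A)
    (hirr : ∀ p : Submodule E V, (∀ a ∈ A, ∀ v ∈ p, a v ∈ p) → p = ⊥ ∨ p = ⊤) :
    A = ⊤ := by
  classical
  -- orbit lemma
  have horb : ∀ v : V, v ≠ 0 → ∀ w : V, ∃ a ∈ A, a v = w := by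
    intro v hv w
    have hqinv : ∀ a ∈ A, ∀ x ∈ A.map (LinearMap.applyₗ (R := E) v), a x ∈ A.map (LinearMap.applyₗ (R := E) v) := by
      rintro a ha x ⟨b, hb, rfl⟩
      exact ⟨a ∘ₗ b, hmul a ha b hb, rfl⟩
    have hqtop : A.map (LinearMap.applyₗ (R := E) v) = ⊤ := by
      rcases hirr _ hqinv with h | h
      · exfalso
        apply hv
        have hvm : v ∈ A.map (LinearMap.applyₗ (R := E) v) := ⟨LinearMap.id, hone, rfl⟩
        rw [h] at hvm
        simpa using hvm
      · exact h
    have hw : w ∈ A.map (LinearMap.applyₗ (R := E) v) := by rw [hqtop]; trivial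
    exact hw
  -- a minimal-rank nonzero element
  have hidne : (LinearMap.id : V →ₗ[E] V) ≠ 0 := by
    intro h
    obtain ⟨x, hx⟩ := exists_ne (0 : V)
    exact hx (by simpa using DFunLike.congr_fun h x)
  have hsne : ∃ n, n ∈ {n | ∃ T ∈ A, T ≠ 0 ∧ finrank E (LinearMap.range T) = n} :=
    ⟨_, LinearMap.id, hone, hidne, rfl⟩
  obtain ⟨T, hTA, hT0, hTr⟩ := Nat.sInf_mem hsne
  have hmin : ∀ S ∈ A, S ≠ 0 → finrank E (LinearMap.range T) ≤ finrank E (LinearMap.range S) := by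
    intro S hSA hS0
    rw [hTr]
    exact Nat.sInf_le ⟨S, hSA, hS0, rfl⟩
  -- T has rank one
  obtain ⟨u, hu⟩ : ∃ u, T u ≠ 0 := by
    by_contra h
    push_neg at h
    exact hT0 (LinearMap.ext fun x => h x)
  have hrange1 : LinearMap.range T = Submodule.span E {T u} := by
    symm
    apply Submodule.eq_of_le_of_finrank_le
    · rw [Submodule.span_le, Set.singleton_subset_iff]
      exact LinearMap.mem_range_self T u
    · rw [finrank_span_singleton hu]
      -- show finrank E (range T) ≤ 1
      by_contra hgt
      push_neg at hgt
      -- there is v with T v ∉ span {T u}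
      obtain ⟨v, hv⟩ : ∃ v, T v ∉ Submodule.span E {T u} := by
        by_contra h
        push_neg at h
        have : LinearMap.range T ≤ Submodule.span E {T u} := by
          rintro _ ⟨x, rfl⟩
          exact h x
        have := Submodule.finrank_mono this
        rw [finrank_span_singleton hu] at this
        omega
      obtain ⟨a, haA, hav⟩ := horb (T u) hu v
      -- eigenvalue of (T ∘ a) restricted to range T
      have hstab : ∀ x ∈ LinearMap.range T, (T ∘ₗ a) x ∈ LinearMap.range T := by
        intro x _
        exact LinearMap.mem_range_self T (a x)
      set g : Module.End E ↥(LinearMap.range T) := (T ∘ₗ a).restrict hstab with hg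
      haveI : Nontrivial ↥(LinearMap.range T) :=
        Submodule.nontrivial_iff_ne_bot.mpr (by
          intro h
          exact hu (by simpa [h] using LinearMap.mem_range_self T u))
      obtain ⟨c, hc⟩ := Module.End.exists_eigenvalue g
      obtain ⟨x, hx⟩ := hc.exists_hasEigenvector
      set φ : V →ₗ[E] V := T ∘ₗ a - c • LinearMap.id with hφ
      have hφx : φ (x : V) = 0 := by
        have := hx.apply_eq_smul
        have hgx : (T ∘ₗ a) (x : V) = c • (x : V) := by
          have h2 := congrArg (Subtype.val) this
          simpa [hg, LinearMap.restrict_apply] using h2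
        simp [hφ, hgx]
      set S : V →ₗ[E] V := φ ∘ₗ T with hS
      have hSA : S ∈ A := by
        have h1 : T ∘ₗ a ∈ A := hmul T hTA a haA
        have h2 : (T ∘ₗ a) ∘ₗ T ∈ A := hmul _ h1 T hTA
        have h3 : c • T ∈ A := A.smul_mem c hTA
        have : S = (T ∘ₗ a) ∘ₗ T - c • T := by
          ext y; simp [hS, hφ]
        rw [this]
        exact A.sub_mem h2 h3
      have hS0 : S ≠ 0 := by
        intro h
        apply hv
        have : S u = 0 := by rw [h]; rfl
        have : T v = c • T u := by
          have h2 : (T ∘ₗ a) (T u) - c • T u = 0 := by simpa [hS, hφ] using this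
          have : T (a (T u)) = c • T u := by
            have := sub_eq_zero.mp h2
            simpa using this
          rwa [hav] at this
        rw [this]
        exact Submodule.smul_mem _ _ (Submodule.mem_span_singleton_self _)
      -- rank S < rank T
      have hlt : finrank E (LinearMap.range S) < finrank E (LinearMap.range T) := by
        have hrs : LinearMap.range S = Submodule.map φ (LinearMap.range T) := by
          rw [hS, LinearMap.range_comp]
        set ρ : ↥(LinearMap.range T) →ₗ[E] V := φ ∘ₗ (LinearMap.range T).subtype with hρ
        have hrρ : LinearMap.range ρ = Submodule.map φ (LinearMap.range T) := by
          rw [hρ, LinearMap.range_comp, Submodule.range_subtype]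
        have hker : LinearMap.ker ρ ≠ ⊥ := by
          rw [Submodule.ne_bot_iff]
          refine ⟨x, ?_, hx.right⟩
          rw [LinearMap.mem_ker, hρ]
          simpa using hφx
        have hkerpos : 0 < finrank E (LinearMap.ker ρ) := by
          rcases Nat.eq_zero_or_pos (finrank E (LinearMap.ker ρ)) with h | h
          · exact absurd (Submodule.finrank_eq_zero.mp h) hker
          · exact h
        have hrn := LinearMap.finrank_range_add_finrank_ker ρ
        have : finrank E ↥(LinearMap.range ρ) < finrank E ↥(LinearMap.range T) := by
          have : finrank E ↥(LinearMap.range T) = finrank E ↥(LinearMap.range ρ) + finrank E ↥(LinearMap.ker ρ) := by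
            rw [← hrn]
          omega
        have heq : finrank E ↥(LinearMap.range S) = finrank E ↥(LinearMap.range ρ) := by
          rw [hrs, hrρ]
        omega
      exact absurd (hmin S hSA hS0) (by omega)
  -- extract rank-one form
  obtain ⟨ℓ, hℓ⟩ := exists_dual_eq_one (F := E) hu
  set f0 : Module.Dual E V := ℓ ∘ₗ T with hf0
  have hTform : ∀ y : V, T y = f0 y • T u := by
    intro y
    have : T y ∈ Submodule.span E {T u} := by rw [← hrange1]; exact LinearMap.mem_range_self T y
    obtain ⟨d, hd⟩ := Submodule.mem_span_singleton.mp this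
    have hf0y : f0 y = d := by
      rw [hf0]
      simp only [LinearMap.coe_comp, Function.comp_apply]
      rw [← hd, map_smul, hℓ, smul_eq_mul, mul_one]
    rw [hf0y, hd]
  have hf0u : f0 u = 1 := by simpa [hf0] using hℓ
  -- the set of functionals g with all g.smulRight v ∈ A
  set N : Submodule E (Module.Dual E V) :=
    { carrier := {g | ∀ v : V, g.smulRight v ∈ A}
      add_mem' := by
        intro g g' hg hg' v
        have : (g + g').smulRight v = g.smulRight v + g'.smulRight v := by
          ext y; simp [add_smul]
        rw [this]; exact A.add_mem (hg v) (hg' v)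
      zero_mem' := by
        intro v
        have : (0 : Module.Dual E V).smulRight v = 0 := by ext y; simp
        rw [this]; exact A.zero_mem
      smul_mem' := by
        intro c g hg v
        have : (c • g).smulRight v = c • g.smulRight v := by
          ext y; simp [mul_smul]
        rw [this]; exact A.smul_mem c (hg v) } with hN
  have hf0N : f0 ∈ N := by
    intro v
    obtain ⟨a, haA, hav⟩ := horb (T u) hu v
    have : f0.smulRight v = a ∘ₗ T := by
      ext y
      simp [hTform y, hav]
    rw [this]
    exact hmul a haA T hTA
  have hNtop : N = ⊤ := by
    apply dual_sub_eq_top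
    intro y hy
    have hKinv : ∀ a ∈ A, ∀ z ∈ N.dualCoannihilator, a z ∈ N.dualCoannihilator := by
      intro a ha z hz
      rw [Submodule.mem_dualCoannihilator] at hz ⊢
      intro g hgN
      have hga : g ∘ₗ a ∈ N := by
        intro v
        have : (g ∘ₗ a).smulRight v = g.smulRight v ∘ₗ a := by
          ext w; simp
        rw [this]
        exact hmul _ (hgN v) a ha
      exact hz _ hga
    rcases hirr _ hKinv with h | h
    · have : y ∈ N.dualCoannihilator := (Submodule.mem_dualCoannihilator y).mpr hy
      rw [h] at this; simpa using this
    · exfalso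
      have : u ∈ N.dualCoannihilator := by rw [h]; trivial
      rw [Submodule.mem_dualCoannihilator] at this
      have := this f0 hf0N
      rw [hf0u] at this
      exact one_ne_zero this
  apply rank_one_span
  intro g v
  have hgN : g ∈ N := by rw [hNtop]; trivial
  exact hgN v


lemma abs_irred_span {F : Type u} [Field F] {H : Type v} [Group H]
    {W : Type w} [AddCommGroup W] [Module F W] [FiniteDimensional F W]
    (τ : Representation F H W) (hτ : RepIsAbsolutelyIrreducible τ) :
    Submodule.span F (Set.range fun h : H => (τ h : W →ₗ[F] W)) = ⊤ := by
  classical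
  obtain ⟨hnt, hirr⟩ := hτ (AlgebraicClosure F)
  set E := AlgebraicClosure F with hE
  haveI := hnt
  set s : Set (Module.End E (E ⊗[F] W)) := Set.range fun h : H => LinearMap.baseChange E (τ h)
    with hs
  have hss : s * s ⊆ s := by
    rintro z ⟨x, ⟨h1, rfl⟩, y, ⟨h2, rfl⟩, rfl⟩
    refine ⟨h1 * h2, ?_⟩
    show LinearMap.baseChange E (τ (h1 * h2)) = _
    rw [map_mul, Module.End.mul_eq_comp, LinearMap.baseChange_comp, ← Module.End.mul_eq_comp]
  have hA : Submodule.span E s = ⊤ := by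
    apply burnside
    · apply Submodule.subset_span
      refine ⟨1, ?_⟩
      show LinearMap.baseChange E (τ 1) = LinearMap.id
      rw [map_one]
      exact LinearMap.baseChange_one F W
    · intro a ha b hb
      have hmem : a * b ∈ Submodule.span E s * Submodule.span E s :=
        Submodule.mul_mem_mul ha hb
      rw [Submodule.span_mul_span] at hmem
      exact Submodule.span_mono hss hmem
    · intro p hp
      exact hirr p fun h xx hx => hp _ (Submodule.subset_span ⟨h, rfl⟩) xx hx
  -- descent to F
  set S : Submodule F (W →ₗ[F] W) := Submodule.span F (Set.range fun h : H => (τ h : W →ₗ[F] W))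
    with hSdef
  set n : ℕ := Module.finrank F ↥S with hn
  set b : Basis (Fin n) F ↥S := Module.finBasis F ↥S with hb
  set g : Fin n → Module.End E (E ⊗[F] W) := fun i => LinearMap.baseChange E ((b i : ↥S) : W →ₗ[F] W)
    with hg
  set β : (W →ₗ[F] W) →ₗ[F] (E ⊗[F] W →ₗ[E] E ⊗[F] W) := LinearMap.baseChangeHom F E W W with hβ
  have key : ∀ xx : W →ₗ[F] W, xx ∈ S → LinearMap.baseChange E xx ∈ Submodule.span E (Set.range g) := by
    intro xx hx
    have hrepr := b.sum_repr ⟨xx, hx⟩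
    have hx2 : xx = ∑ i, b.repr ⟨xx, hx⟩ i • ((b i : ↥S) : W →ₗ[F] W) := by
      have h2 := congrArg (Subtype.val (p := fun z => z ∈ S)) hrepr
      push_cast at h2
      exact h2.symm
    have hβx : LinearMap.baseChange E xx = ∑ i, b.repr ⟨xx, hx⟩ i • g i := by
      have h5 : β xx = β (∑ i, b.repr ⟨xx, hx⟩ i • ((b i : ↥S) : W →ₗ[F] W)) := congrArg β hx2
      rw [map_sum] at h5
      simp only [map_smul] at h5
      exact h5
    rw [hβx]
    exact Submodule.sum_mem _ fun i _ =>
      Submodule.smul_of_tower_mem _ _ (Submodule.subset_span ⟨i, rfl⟩)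
  have htop2 : Submodule.span E (Set.range g) = ⊤ := by
    rw [eq_top_iff, ← hA, Submodule.span_le]
    rintro _ ⟨h, rfl⟩
    exact key (τ h) (Submodule.subset_span ⟨h, rfl⟩)
  haveI : Fintype ↥(Set.range g) := Set.fintypeRange g
  have h1 : Module.finrank E (Module.End E (E ⊗[F] W)) ≤ n := by
    have hc := finrank_span_le_card (R := E) (Set.range g)
    rw [htop2, finrank_top] at hc
    refine hc.trans ?_
    rw [Set.toFinset_range]
    exact (Finset.card_image_le).trans (by simp)
  have h2 : Module.finrank E (Module.End E (E ⊗[F] W)) = Module.finrank F W * Module.finrank F W := by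
    rw [Module.finrank_linearMap, Module.finrank_baseChange]
  have h3 : Module.finrank F (W →ₗ[F] W) = Module.finrank F W * Module.finrank F W :=
    Module.finrank_linearMap F F W W
  have h4 : n ≤ Module.finrank F (W →ₗ[F] W) := S.finrank_le
  exact Submodule.eq_top_of_finrank_eq (by omega)

/-- If `τ1 : H1 → Aut_F(W1)` is an irreducible finite-dimensional representation over `F` and
`τ2 : H2 → Aut_F(W2)` is an absolutely irreducible finite-dimensional representation over `F`,
then the representation of `H1 × H2` on `Hom_F(W1, W2)` given by
`(h1, h2) · φ = τ2 h2 ∘ φ ∘ τ1 h1⁻¹` is irreducible. -/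
theorem hom_rep_irreducible {F : Type u} [Field F]
    {H1 : Type v} [Group H1] {H2 : Type w} [Group H2]
    {W1 : Type x} [AddCommGroup W1] [Module F W1] [FiniteDimensional F W1]
    {W2 : Type y} [AddCommGroup W2] [Module F W2] [FiniteDimensional F W2]
    (τ1 : Representation F H1 W1) (τ2 : Representation F H2 W2)
    (hτ1 : RepIsIrreducible τ1) (hτ2 : RepIsAbsolutelyIrreducible τ2) :
    Nontrivial (W1 →ₗ[F] W2) ∧
      ∀ p : Submodule F (W1 →ₗ[F] W2),
        (∀ (h1 : H1) (h2 : H2), ∀ φ ∈ p, (τ2 h2) ∘ₗ φ ∘ₗ (τ1 h1⁻¹) ∈ p) →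
          p = ⊥ ∨ p = ⊤ := by
  classical
  haveI hW1 : Nontrivial W1 := hτ1.1
  haveI hW2 : Nontrivial W2 := by
    haveI := (hτ2 F).1
    exact ((TensorProduct.lid F W2).symm.toEquiv).nontrivial
  constructor
  · obtain ⟨x1, hx1⟩ := exists_ne (0 : W1)
    obtain ⟨w2, hw2⟩ := exists_ne (0 : W2)
    obtain ⟨ℓ1, hℓ1⟩ := exists_dual_eq_one (F := F) hx1
    refine nontrivial_of_ne (ℓ1.smulRight w2) 0 ?_
    intro h
    apply hw2
    have h2 := DFunLike.congr_fun h x1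
    simpa [hℓ1] using h2
  · intro p hp
    by_cases hbot : p = ⊥
    · exact Or.inl hbot
    right
    obtain ⟨φ, hφp, hφ0⟩ := (Submodule.ne_bot_iff p).mp hbot
    obtain ⟨w1, hw1⟩ : ∃ w1, φ w1 ≠ 0 := by
      by_contra h
      push_neg at h
      exact hφ0 (LinearMap.ext h)
    have hspan := abs_irred_span τ2 hτ2
    have hstep : ∀ ψ : Module.End F W2, ∀ φ' ∈ p, ψ ∘ₗ φ' ∈ p := by
      intro ψ φ' hφ'
      have hM : Submodule.span F (Set.range fun h : H2 => (τ2 h : W2 →ₗ[F] W2)) ≤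
          Submodule.comap ((LinearMap.llcomp F W1 W2 W2).flip φ') p := by
        rw [Submodule.span_le]
        rintro _ ⟨h, rfl⟩
        simp only [Submodule.mem_comap, LinearMap.flip_apply, LinearMap.llcomp_apply]
        have h3 := hp 1 h φ' hφ'
        simpa [LinearMap.llcomp_apply', Module.End.one_eq_id] using h3
      rw [hspan] at hM
      have h4 := hM (Submodule.mem_top (x := ψ))
      simpa [LinearMap.llcomp_apply'] using h4
    obtain ⟨ℓ, hℓ⟩ := exists_dual_eq_one (F := F) hw1
    set lam : Module.Dual F W1 := ℓ ∘ₗ φ with hlam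
    have hlam1 : lam w1 = 1 := by simp [hlam, hℓ]
    have hrank1 : ∀ w2 : W2, lam.smulRight w2 ∈ p := by
      intro w2
      have heq : lam.smulRight w2 = (ℓ.smulRight w2) ∘ₗ φ := by
        ext y
        simp [hlam]
      rw [heq]
      exact hstep _ φ hφp
    set N : Submodule F (Module.Dual F W1) :=
      { carrier := {g | ∀ w2 : W2, g.smulRight w2 ∈ p}
        add_mem' := by
          intro g g' hg hg' w2
          have heq : (g + g').smulRight w2 = g.smulRight w2 + g'.smulRight w2 := by
            ext y; simp [add_smul]
          rw [heq]
          exact p.add_mem (hg w2) (hg' w2)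
        zero_mem' := by
          intro w2
          have heq : (0 : Module.Dual F W1).smulRight w2 = 0 := by ext y; simp
          rw [heq]
          exact p.zero_mem
        smul_mem' := by
          intro c g hg w2
          have heq : (c • g).smulRight w2 = c • g.smulRight w2 := by
            ext y; simp [mul_smul]
          rw [heq]
          exact p.smul_mem c (hg w2) } with hN
    have hlamN : lam ∈ N := hrank1
    have hNtop : N = ⊤ := by
      apply dual_sub_eq_top
      intro y hy
      have hKinv : ∀ h : H1, ∀ z ∈ N.dualCoannihilator, τ1 h z ∈ N.dualCoannihilator := by
        intro h z hz
        rw [Submodule.mem_dualCoannihilator] at hz ⊢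
        intro g hgN
        have hga : g ∘ₗ τ1 h ∈ N := by
          intro w2
          have heq : (g ∘ₗ τ1 h).smulRight w2 = (g.smulRight w2) ∘ₗ τ1 h := by
            ext z'; simp
          rw [heq]
          have h5 := hp h⁻¹ 1 (g.smulRight w2) (hgN w2)
          simpa [Module.End.one_eq_id] using h5
        exact hz _ hga
      rcases hτ1.2 N.dualCoannihilator hKinv with h | h
      · have hy' : y ∈ N.dualCoannihilator := (Submodule.mem_dualCoannihilator y).mpr hy
        rw [h] at hy'
        simpa using hy'
      · exfalso
        have hw1' : w1 ∈ N.dualCoannihilator := by rw [h]; trivial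
        have h6 := (Submodule.mem_dualCoannihilator w1).mp hw1' lam hlamN
        rw [hlam1] at h6
        exact one_ne_zero h6
    apply rank_one_span
    intro g w2
    have hgN : g ∈ N := by rw [hNtop]; trivial
    exact hgN w2
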